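/- arXiv:0808.1219 — 9 statements merged into one kernel-verified Lean document; each statement's English description precedes it below -/
import Mathlib

section
/- Let 0 < a < 1 < b, q = sqrt((b-1)/(1-a)), and m ≥ max{q, 1/q}. Then for all t with 0 < t ≤ 1, we have m·t^a − t ≥ t − t^b/m. -/
theorem stmt_0 (a b q m : ℝ) (ha0 : 0 < a) (ha1 : a < 1) (hb : 1 < b)
    (hq : q = Real.sqrt ((b - 1) / (1 - a))) (hm : max q q⁻¹ ≤ m) :
    ∀ t : ℝ, 0 < t → t ≤ 1 → m * t ^ a - t ≥ t - t ^ b / m := by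
  have hfrac : 0 < (b - 1) / (1 - a) := div_pos (by linarith) (by linarith)
  have hqpos : 0 < q := hq ▸ Real.sqrt_pos.mpr hfrac
  have hmq : q ≤ m := le_trans (le_max_left _ _) hm
  have hmqi : q⁻¹ ≤ m := le_trans (le_max_right _ _) hm
  have hm1 : 1 ≤ m := by
    rcases le_or_gt 1 q with h | h
    · linarith
    · have : 1 < q⁻¹ := (one_lt_inv₀ hqpos).mpr h
      linarith
  have hm0 : 0 < m := by linarith
  have hq2 : q ^ 2 = (b - 1) / (1 - a) := by
    rw [hq, Real.sq_sqrt hfrac.le]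
  have hm2 : b - 1 ≤ (1 - a) * m ^ 2 := by
    have : q ^ 2 ≤ m ^ 2 := pow_le_pow_left₀ hqpos.le hmq 2
    rw [hq2] at this
    rw [div_le_iff₀ (by linarith : (0:ℝ) < 1 - a)] at this
    linarith [this]
  intro t ht ht1
  set L := Real.log t with hL
  have hLneg : L ≤ 0 := Real.log_nonpos ht.le ht1
  have e1 : 1 + (a - 1) * L ≤ Real.exp ((a - 1) * L) := Real.add_one_le_exp _ |>.trans_eq' (by ring)
  have e2 : 1 + (b - 1) * L ≤ Real.exp ((b - 1) * L) := Real.add_one_le_exp _ |>.trans_eq' (by ring)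
  have key : 2 * m ≤ m ^ 2 * Real.exp ((a - 1) * L) + Real.exp ((b - 1) * L) := by
    nlinarith [mul_nonneg (sq_nonneg m) (sub_nonneg.mpr e1), sq_nonneg (m - 1),
      mul_nonneg (neg_nonneg.mpr hLneg) (sub_nonneg.mpr hm2)]
  have hexpL : Real.exp L = t := Real.exp_log ht
  have hta : t ^ a = Real.exp ((a - 1) * L) * Real.exp L := by
    rw [← Real.exp_add, Real.rpow_def_of_pos ht, ← hL]; ring_nf
  have htb : t ^ b = Real.exp ((b - 1) * L) * Real.exp L := by
    rw [← Real.exp_add, Real.rpow_def_of_pos ht, ← hL]; ring_nf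
  have hE : 0 < Real.exp L := Real.exp_pos _
  rw [ge_iff_le, hta, htb, ← hexpL]
  have h3 : Real.exp ((b - 1) * L) * Real.exp L / m * m = Real.exp ((b - 1) * L) * Real.exp L :=
    div_mul_cancel₀ _ hm0.ne'
  nlinarith [mul_le_mul_of_nonneg_right key hE.le, h3, hm0]
end

section
/- Let 0 < a < 1 < b, q = sqrt((b-1)/(1-a)), and m ≥ max{q, 1/q}. Then for all t ≥ 1, we have m·t^b − t ≥ t − t^a/m. -/
theorem stmt_1 (a b q m : ℝ) (ha0 : 0 < a) (ha1 : a < 1) (hb : 1 < b)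
    (hq : q = Real.sqrt ((b - 1) / (1 - a))) (hm : max q q⁻¹ ≤ m) :
    ∀ t : ℝ, 1 ≤ t → m * t ^ b - t ≥ t - t ^ a / m := by
  have hqpos : 0 < q := by
    rw [hq]; exact Real.sqrt_pos.mpr (div_pos (by linarith) (by linarith))
  have hq2 : q ^ 2 = (b - 1) / (1 - a) := by
    rw [hq, Real.sq_sqrt (le_of_lt (div_pos (by linarith) (by linarith)))]
  have hq2' : q ^ 2 * (1 - a) = b - 1 := by
    rw [hq2, div_mul_cancel₀ _ (by linarith : (1:ℝ) - a ≠ 0)]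
  have hm1 : q⁻¹ ≤ m := le_trans (le_max_right _ _) hm
  have hm0 : 0 < m := lt_of_lt_of_le (by positivity) hm1
  have hmq : 1 ≤ m * q := by
    rw [← inv_mul_cancel₀ hqpos.ne']
    exact mul_le_mul_of_nonneg_right hm1 hqpos.le
  intro t ht
  have ht0 : 0 < t := lt_of_lt_of_le one_pos ht
  set s := Real.log t with hsdef
  have hs : 0 ≤ s := Real.log_nonneg ht
  have htb : t ^ b = Real.exp s * Real.exp ((b - 1) * s) := by
    rw [Real.rpow_def_of_pos ht0, ← Real.exp_add, ← hsdef]; ring_nf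
  have hta : t ^ a = Real.exp s * Real.exp (-((1 - a) * s)) := by
    rw [Real.rpow_def_of_pos ht0, ← Real.exp_add, ← hsdef]; ring_nf
  have hts : t = Real.exp s := (Real.exp_log ht0).symm
  have e1 : (b - 1) * s + 1 ≤ Real.exp ((b - 1) * s) := Real.add_one_le_exp _
  have e2 : -((1 - a) * s) + 1 ≤ Real.exp (-((1 - a) * s)) := Real.add_one_le_exp _
  have hexp : 0 < Real.exp s := Real.exp_pos s
  have hK : (b - 1) * (t - t ^ a) ≤ (1 - a) * (t ^ b - t) := by
    rw [htb, hta, hts]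
    nlinarith [mul_le_mul_of_nonneg_left e1 (mul_nonneg (sub_nonneg.mpr ha1.le) hexp.le),
      mul_le_mul_of_nonneg_left e2 (mul_nonneg (sub_nonneg.mpr hb.le) hexp.le)]
  have hta0 : t ^ a ≤ t := by
    calc t ^ a ≤ t ^ (1:ℝ) := Real.rpow_le_rpow_of_exponent_le ht ha1.le
    _ = t := Real.rpow_one t
  have h1 : q ^ 2 * (t - t ^ a) ≤ t ^ b - t := by
    nlinarith [hK, hq2']
  have h2 : t - t ^ a ≤ m ^ 2 * (t ^ b - t) := by
    nlinarith [mul_nonneg (by positivity : (0:ℝ) ≤ q ^ 2) (sub_nonneg.mpr hta0),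
      sq_nonneg (m * q), mul_le_mul_of_nonneg_left h1 (sq_nonneg m),
      mul_le_mul hmq hmq zero_le_one (by positivity : (0:ℝ) ≤ m * q),
      sub_nonneg.mpr hta0]
  have hdiv : t ^ a / m * m = t ^ a := div_mul_cancel₀ _ hm0.ne'
  nlinarith [h2, sq_nonneg (m - 1), ht0, hm0, hdiv, mul_pos ht0 hm0]
end

section
/- Let n ≥ 2, K > 1, α = K^(1/(1−n)), β = 1/α, and c = sqrt(β). Then for all t ∈ (0,1): c·t^α − t ≥ t − t^β/c. -/
theorem stmt_2 (n : ℕ) (K α β c : ℝ) (hn : 2 ≤ n) (hK : 1 < K)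
    (hα : α = K ^ ((1 : ℝ) / (1 - (n : ℝ)))) (hβ : β = 1 / α)
    (hc : c = Real.sqrt β) :
    ∀ t : ℝ, 0 < t → t < 1 → c * t ^ α - t ≥ t - t ^ β / c := by
  have hK0 : (0:ℝ) < K := lt_trans one_pos hK
  have hn2 : (2:ℝ) ≤ (n:ℝ) := by exact_mod_cast hn
  have hexp : (1:ℝ) / (1 - (n:ℝ)) < 0 := by
    apply div_neg_of_pos_of_neg one_pos; linarith
  have hα0 : 0 < α := hα ▸ Real.rpow_pos_of_pos hK0 _
  have hα1 : α < 1 := hα ▸ Real.rpow_lt_one_of_one_lt_of_neg hK hexp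
  have hβ1 : 1 < β := by rw [hβ]; exact (one_lt_div hα0).2 hα1
  have hβ0 : 0 < β := lt_trans one_pos hβ1
  have hαβ : α * β = 1 := by rw [hβ]; field_simp
  have hc0 : 0 < c := hc ▸ Real.sqrt_pos.2 hβ0
  have hc2 : c ^ 2 = β := by rw [hc, sq]; exact Real.mul_self_sqrt hβ0.le
  have hc1 : 1 ≤ c := by nlinarith
  intro t ht0 ht1
  set u : ℝ := t ^ (1 - α) with hu
  have hu0 : 0 < u := Real.rpow_pos_of_pos ht0 _
  have hu1 : u < 1 := Real.rpow_lt_one ht0.le ht1 (by linarith)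
  have htα : t ^ α = t / u := by
    rw [eq_div_iff hu0.ne', hu, ← Real.rpow_add ht0]
    norm_num
  have htβ : t ^ β = t * u ^ β := by
    rw [hu, ← Real.rpow_mul ht0.le]
    nth_rewrite 2 [← Real.rpow_one t]
    rw [← Real.rpow_add ht0]
    congr 1
    nlinarith
  -- Bernoulli
  have hber : 1 + β * (u - 1) ≤ u ^ β := by
    have := one_add_mul_self_le_rpow_one_add (s := u - 1) (by linarith) hβ1.le
    simpa using this
  -- key inequality : c/u + u^β/c ≥ 2
  have hub0 : 0 < u ^ β := Real.rpow_pos_of_pos hu0 _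
  have key : c / u + u ^ β / c ≥ 2 := by
    rw [ge_iff_le, div_add_div _ _ hu0.ne' hc0.ne', le_div_iff₀ (by positivity)]
    nlinarith [sq_nonneg (c - 1), sq_nonneg (1 - u), mul_pos hu0 hc0, hber,
      mul_le_mul_of_nonneg_left hber (mul_pos hu0 hc0).le]
  rw [htα, htβ]
  have h2 : 2 * t ≤ c * (t / u) + t * u ^ β / c := by
    have := mul_le_mul_of_nonneg_left key ht0.le
    calc 2 * t = t * 2 := by ring
    _ ≤ t * (c / u + u ^ β / c) := by nlinarith
    _ = c * (t / u) + t * u ^ β / c := by ring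
  linarith
end

section
/- Let n ≥ 2, K > 1, α = K^(1/(1−n)), β = 1/α, and c = sqrt(β). Then for all t > 1: c·t^β − t ≥ t − t^α/c. -/
theorem stmt_3 (n : ℕ) (K α β c : ℝ) (hn : 2 ≤ n) (hK : 1 < K)
    (hα : α = K ^ ((1 : ℝ) / (1 - (n : ℝ)))) (hβ : β = 1 / α)
    (hc : c = Real.sqrt β) :
    ∀ t : ℝ, 1 < t → c * t ^ β - t ≥ t - t ^ α / c := by
  have hn2 : (2 : ℝ) ≤ (n : ℝ) := by exact_mod_cast hn
  have hα0 : 0 < α := by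
    rw [hα]; exact Real.rpow_pos_of_pos (by linarith) _
  have hβ0 : 0 < β := by rw [hβ]; positivity
  have hc0 : 0 < c := by rw [hc]; exact Real.sqrt_pos.mpr hβ0
  have hsum : 2 ≤ α + β := by
    rw [hβ, show α + 1 / α = (α ^ 2 + 1) / α by field_simp, le_div_iff₀ hα0]
    nlinarith [sq_nonneg (α - 1)]
  intro t ht
  have ht0 : 0 < t := by linarith
  have ha : 0 < c * t ^ β := by positivity
  have hb : 0 < t ^ α / c := by positivity
  set u := Real.sqrt (c * t ^ β) with hu
  set v := Real.sqrt (t ^ α / c) with hv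
  have hu2 : u ^ 2 = c * t ^ β := Real.sq_sqrt ha.le
  have hv2 : v ^ 2 = t ^ α / c := Real.sq_sqrt hb.le
  have huv : u * v = t ^ ((α + β) / 2) := by
    rw [hu, hv, ← Real.sqrt_mul ha.le]
    have : c * t ^ β * (t ^ α / c) = t ^ (α + β) := by
      field_simp
      rw [Real.rpow_add ht0]
      ring
    rw [this, Real.sqrt_eq_rpow, ← Real.rpow_mul ht0.le]
    ring_nf
  have hkey : 2 * t ^ ((α + β) / 2) ≤ c * t ^ β + t ^ α / c := by
    nlinarith [sq_nonneg (u - v)]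
  have hexp : t ^ (1 : ℝ) ≤ t ^ ((α + β) / 2) :=
    Real.rpow_le_rpow_of_exponent_le ht.le (by linarith)
  rw [Real.rpow_one] at hexp
  linarith
end

section
/- For b ≥ 1 and all t > 0, log(1+t^b)/(log(1+t))^b ≤ (log 2)^(1−b), with equality at t = 1. -/
open Real Set

noncomputable def auxH : ℝ → ℝ := fun s => Real.log (Real.log (1 + Real.exp s))

noncomputable def auxG : ℝ → ℝ := fun s =>
  Real.exp s / ((1 + Real.exp s) * Real.log (1 + Real.exp s))

lemma aux_one_lt (s : ℝ) : (1:ℝ) < 1 + Real.exp s := by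
  nlinarith [Real.exp_pos s]

lemma aux_Lpos (s : ℝ) : 0 < Real.log (1 + Real.exp s) :=
  Real.log_pos (aux_one_lt s)

lemma aux_hasDerivAt_inner (s : ℝ) :
    HasDerivAt (fun s => Real.log (1 + Real.exp s)) (Real.exp s / (1 + Real.exp s)) s :=
  ((Real.hasDerivAt_exp s).const_add 1).log (by positivity)

lemma aux_hasDerivAt_h (s : ℝ) : HasDerivAt auxH (auxG s) s := by
  have h := (aux_hasDerivAt_inner s).log (aux_Lpos s).ne'
  convert h using 1
  · rfl
  rw [auxG, div_div]

lemma aux_hasDerivAt_D (s : ℝ) :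
    HasDerivAt (fun s => (1 + Real.exp s) * Real.log (1 + Real.exp s))
      (Real.exp s * Real.log (1 + Real.exp s) + Real.exp s) s := by
  have h := ((Real.hasDerivAt_exp s).const_add 1).mul (aux_hasDerivAt_inner s)
  convert h using 1
  · rfl
  · rfl
  · rfl
  have hpos : (1 + Real.exp s) ≠ 0 := by positivity
  field_simp

lemma aux_G_antitone : Antitone auxG := by
  have key : ∀ s : ℝ, HasDerivAt auxG
      ((Real.exp s * ((1 + Real.exp s) * Real.log (1 + Real.exp s)) -
        Real.exp s * (Real.exp s * Real.log (1 + Real.exp s) + Real.exp s)) /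
        ((1 + Real.exp s) * Real.log (1 + Real.exp s)) ^ 2) s := by
    intro s
    exact (Real.hasDerivAt_exp s).div (aux_hasDerivAt_D s)
      (by have := aux_Lpos s; positivity)
  refine antitone_of_deriv_nonpos (fun s => (key s).differentiableAt) (fun s => ?_)
  rw [(key s).deriv]
  have hlog : Real.log (1 + Real.exp s) ≤ Real.exp s := by
    have := Real.log_le_sub_one_of_pos (x := 1 + Real.exp s) (by positivity)
    linarith
  have hnum : Real.exp s * ((1 + Real.exp s) * Real.log (1 + Real.exp s)) -
      Real.exp s * (Real.exp s * Real.log (1 + Real.exp s) + Real.exp s) =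
      Real.exp s * (Real.log (1 + Real.exp s) - Real.exp s) := by ring
  rw [hnum]
  apply div_nonpos_of_nonpos_of_nonneg
  · exact mul_nonpos_of_nonneg_of_nonpos (Real.exp_pos s).le (by linarith)
  · positivity

lemma aux_concave : ConcaveOn ℝ univ auxH := by
  refine Antitone.concaveOn_univ_of_deriv
    (fun s => (aux_hasDerivAt_h s).differentiableAt) ?_
  have : deriv auxH = auxG := funext fun s => (aux_hasDerivAt_h s).deriv
  rw [this]; exact aux_G_antitone

lemma aux_key (b : ℝ) (hb : 1 ≤ b) (s : ℝ) :
    auxH (b * s) ≤ b * auxH s + (1 - b) * auxH 0 := by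
  have hb0 : 0 < b := by linarith
  have h1 : (0:ℝ) ≤ 1 / b := by positivity
  have h2 : (0:ℝ) ≤ 1 - 1 / b := by
    have : 1 / b ≤ 1 := by rw [div_le_one hb0]; exact hb
    linarith
  have h3 : 1 / b + (1 - 1 / b) = 1 := by ring
  have hc := aux_concave.2 (mem_univ (b * s)) (mem_univ 0) h1 h2 h3
  simp only [smul_eq_mul, mul_zero, add_zero] at hc
  have hs : 1 / b * (b * s) = s := by field_simp
  rw [hs] at hc
  have h4 := mul_le_mul_of_nonneg_left hc hb0.le
  have e1 : b * (1 / b * auxH (b * s) + (1 - 1 / b) * auxH 0) =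
      auxH (b * s) + (b - 1) * auxH 0 := by
    field_simp
  rw [e1] at h4
  linarith

lemma aux_h0 : auxH 0 = Real.log (Real.log 2) := by
  simp [auxH, Real.exp_zero]
  norm_num

theorem stmt_9 (b : ℝ) (hb : 1 ≤ b) :
    (∀ t : ℝ, 0 < t →
      Real.log (1 + t ^ b) / Real.log (1 + t) ^ b ≤ Real.log 2 ^ (1 - b)) ∧
    Real.log (1 + (1 : ℝ) ^ b) / Real.log (1 + 1) ^ b = Real.log 2 ^ (1 - b) := by
  have hlog2 : (0:ℝ) < Real.log 2 := Real.log_pos one_lt_two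
  constructor
  · intro t ht
    set s := Real.log t with hs
    have hts : t = Real.exp s := (Real.exp_log ht).symm
    have hpow : t ^ b = Real.exp (b * s) := by
      rw [Real.rpow_def_of_pos ht, mul_comm]
    have hLpos : 0 < Real.log (1 + t) := by
      apply Real.log_pos; linarith
    have hden : 0 < Real.log (1 + t) ^ b := Real.rpow_pos_of_pos hLpos b
    rw [div_le_iff₀ hden]
    -- LHS = exp (auxH (b*s)), RHS = exp ((1-b) * log(log 2) + b * auxH s)
    have hL : Real.log (1 + t ^ b) = Real.exp (auxH (b * s)) := by
      rw [hpow, auxH, Real.exp_log (aux_Lpos (b * s))]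
    have hR : Real.log 2 ^ (1 - b) * Real.log (1 + t) ^ b =
        Real.exp ((1 - b) * Real.log (Real.log 2) + b * auxH s) := by
      rw [Real.rpow_def_of_pos hlog2, Real.rpow_def_of_pos hLpos, ← Real.exp_add]
      congr 2
      · ring
      · rw [auxH, ← hts]; ring
    rw [hL, hR]
    apply Real.exp_le_exp.2
    have := aux_key b hb s
    rw [aux_h0] at this
    linarith
  · rw [Real.one_rpow, show (1:ℝ) + 1 = 2 from by norm_num,
      Real.rpow_sub hlog2, Real.rpow_one]
end

section
/- Let 0 < a ≤ 1 ≤ b, φ(t) = max{t^a, t^b}, and c > 1. Then for 0 < t < 1: log(1 + c·φ(t)) ≤ c·(log(1+t))^a. -/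
theorem stmt_12 (a b c : ℝ) (ha0 : 0 < a) (ha1 : a ≤ 1) (hb : 1 ≤ b) (hc : 1 < c)
    (φ : ℝ → ℝ) (hφ : ∀ t : ℝ, φ t = max (t ^ a) (t ^ b)) :
    ∀ t : ℝ, 0 < t → t < 1 →
      Real.log (1 + c * φ t) ≤ c * Real.log (1 + t) ^ a := by
  intro t ht0 ht1
  have hab : a ≤ b := ha1.trans hb
  have hta : (0:ℝ) < t ^ a := Real.rpow_pos_of_pos ht0 a
  have hmax : φ t = t ^ a := by
    rw [hφ, max_eq_left]
    exact Real.rpow_le_rpow_of_exponent_ge ht0 ht1.le hab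
  rw [hmax]
  have hta1 : t ^ a < 1 := Real.rpow_lt_one ht0.le ht1 ha0
  have h1ta : (0:ℝ) < 1 + t ^ a := by linarith
  -- Step 1: log (1 + c * t^a) ≤ c * log (1 + t^a)
  have step1 : Real.log (1 + c * t ^ a) ≤ c * Real.log (1 + t ^ a) := by
    have hB : 1 + c * t ^ a ≤ (1 + t ^ a) ^ c :=
      one_add_mul_self_le_rpow_one_add (by linarith) hc.le
    calc Real.log (1 + c * t ^ a) ≤ Real.log ((1 + t ^ a) ^ c) :=
          Real.log_le_log (by nlinarith) hB
      _ = c * Real.log (1 + t ^ a) := Real.log_rpow h1ta c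
  -- Step 2: log (1 + t^a) ≤ (log (1 + t)) ^ a
  have hlpos : 0 < Real.log (1 + t ^ a) := Real.log_pos (by linarith)
  have hp0 : (0:ℝ) ≤ t ^ (1 - a) := (Real.rpow_pos_of_pos ht0 _).le
  have hp1 : t ^ (1 - a) ≤ 1 := Real.rpow_le_one ht0.le ht1.le (by linarith)
  -- Bernoulli: (1 + t^a) ^ (t^(1-a)) ≤ 1 + t^(1-a) * t^a = 1 + t
  have hmul : t ^ (1 - a) * t ^ a = t := by
    rw [← Real.rpow_add ht0]; norm_num
  have stepA : t ^ (1 - a) * Real.log (1 + t ^ a) ≤ Real.log (1 + t) := by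
    have hB : (1 + t ^ a) ^ (t ^ (1 - a)) ≤ 1 + t ^ (1 - a) * t ^ a :=
      rpow_one_add_le_one_add_mul_self (by linarith) hp0 hp1
    rw [hmul] at hB
    calc t ^ (1 - a) * Real.log (1 + t ^ a)
        = Real.log ((1 + t ^ a) ^ (t ^ (1 - a))) := (Real.log_rpow h1ta _).symm
      _ ≤ Real.log (1 + t) := Real.log_le_log (Real.rpow_pos_of_pos h1ta _) hB
  have stepB : Real.log (1 + t ^ a) ≤ t ^ a := by
    have := Real.log_le_sub_one_of_pos h1ta
    linarith
  have step2 : Real.log (1 + t ^ a) ≤ Real.log (1 + t) ^ a := by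
    have key : Real.log (1 + t ^ a)
        = Real.log (1 + t ^ a) ^ a * Real.log (1 + t ^ a) ^ (1 - a) := by
      rw [← Real.rpow_add hlpos]; norm_num
    have h1 : Real.log (1 + t ^ a) ^ (1 - a) ≤ (t ^ a) ^ (1 - a) :=
      Real.rpow_le_rpow hlpos.le stepB (by linarith)
    have h2 : (t ^ (1 - a) * Real.log (1 + t ^ a)) ^ a ≤ Real.log (1 + t) ^ a :=
      Real.rpow_le_rpow (by positivity) stepA ha0.le
    have h3 : (t ^ (1 - a) * Real.log (1 + t ^ a)) ^ a
        = (t ^ a) ^ (1 - a) * Real.log (1 + t ^ a) ^ a := by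
      rw [Real.mul_rpow hp0 hlpos.le, ← Real.rpow_mul ht0.le,
        ← Real.rpow_mul ht0.le]
      ring_nf
    calc Real.log (1 + t ^ a)
        = Real.log (1 + t ^ a) ^ a * Real.log (1 + t ^ a) ^ (1 - a) := key
      _ ≤ Real.log (1 + t ^ a) ^ a * (t ^ a) ^ (1 - a) := by
          exact mul_le_mul_of_nonneg_left h1 (Real.rpow_nonneg hlpos.le _)
      _ = (t ^ (1 - a) * Real.log (1 + t ^ a)) ^ a := by rw [h3]; ring
      _ ≤ Real.log (1 + t) ^ a := h2
  calc Real.log (1 + c * t ^ a) ≤ c * Real.log (1 + t ^ a) := step1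
    _ ≤ c * Real.log (1 + t) ^ a := by
        exact mul_le_mul_of_nonneg_left step2 (by linarith)
end

section
/- Let 0 < a ≤ 1 ≤ b and φ(t) = max{t^a, t^b}. Then for all s, t > 0: 2^(1−b) ≤ (φ(s) + φ(t))/φ(s+t) ≤ 2^(1−a). -/
open Real NNReal

lemma helper_ge (x y p : ℝ) (hx : 0 ≤ x) (hy : 0 ≤ y) (hp : 1 ≤ p) :
    (x + y) ^ p ≤ 2 ^ (p - 1) * (x ^ p + y ^ p) := by
  have h := NNReal.rpow_add_le_mul_rpow_add_rpow x.toNNReal y.toNNReal hp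
  have h2 : ((x.toNNReal + y.toNNReal : ℝ≥0) : ℝ) = x + y := by
    push_cast; rw [Real.coe_toNNReal x hx, Real.coe_toNNReal y hy]
  calc (x + y) ^ p = ((x.toNNReal + y.toNNReal : ℝ≥0) : ℝ) ^ p := by rw [h2]
    _ = (((x.toNNReal + y.toNNReal) ^ p : ℝ≥0) : ℝ) := by rw [NNReal.coe_rpow]
    _ ≤ (((2 : ℝ≥0) ^ (p - 1) * (x.toNNReal ^ p + y.toNNReal ^ p) : ℝ≥0) : ℝ) := by
        exact_mod_cast h
    _ = 2 ^ (p - 1) * (x ^ p + y ^ p) := by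
        push_cast [NNReal.coe_rpow, Real.coe_toNNReal x hx, Real.coe_toNNReal y hy]
        norm_num

lemma helper_le (x y p : ℝ) (hx : 0 ≤ x) (hy : 0 ≤ y) (hp0 : 0 < p) (hp1 : p ≤ 1) :
    x ^ p + y ^ p ≤ 2 ^ (1 - p) * (x + y) ^ p := by
  have hq : 1 ≤ 1 / p := by rw [le_div_iff₀ hp0]; linarith
  have h := helper_ge (x ^ p) (y ^ p) (1 / p) (by positivity) (by positivity) hq
  have hxp : (x ^ p) ^ (1 / p) = x := by
    rw [← Real.rpow_mul hx, mul_one_div_cancel hp0.ne', Real.rpow_one]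
  have hyp : (y ^ p) ^ (1 / p) = y := by
    rw [← Real.rpow_mul hy, mul_one_div_cancel hp0.ne', Real.rpow_one]
  rw [hxp, hyp] at h
  have hS : (0 : ℝ) ≤ (x ^ p + y ^ p) ^ (1 / p) := by positivity
  have h2 := Real.rpow_le_rpow hS h hp0.le
  rw [← Real.rpow_mul (by positivity), one_div, inv_mul_cancel₀ hp0.ne', Real.rpow_one] at h2
  rw [one_div] at *
  calc x ^ p + y ^ p ≤ (2 ^ (p⁻¹ - 1) * (x + y)) ^ p := h2
    _ = 2 ^ (1 - p) * (x + y) ^ p := by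
        rw [Real.mul_rpow (by positivity) (by positivity), ← Real.rpow_mul (by norm_num)]
        congr 2
        field_simp

lemma helper_subadd (x y p : ℝ) (hx : 0 ≤ x) (hy : 0 ≤ y) (hp0 : 0 ≤ p) (hp1 : p ≤ 1) :
    (x + y) ^ p ≤ x ^ p + y ^ p := by
  have h := NNReal.rpow_add_le_add_rpow x.toNNReal y.toNNReal hp0 hp1
  have h2 : ((x.toNNReal + y.toNNReal : ℝ≥0) : ℝ) = x + y := by
    push_cast; rw [Real.coe_toNNReal x hx, Real.coe_toNNReal y hy]
  calc (x + y) ^ p = (((x.toNNReal + y.toNNReal) ^ p : ℝ≥0) : ℝ) := by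
        rw [NNReal.coe_rpow, h2]
    _ ≤ ((x.toNNReal ^ p + y.toNNReal ^ p : ℝ≥0) : ℝ) := by exact_mod_cast h
    _ = x ^ p + y ^ p := by
        push_cast [NNReal.coe_rpow, Real.coe_toNNReal x hx, Real.coe_toNNReal y hy]
        ring

theorem stmt_14 (a b : ℝ) (ha0 : 0 < a) (ha1 : a ≤ 1) (hb : 1 ≤ b)
    (φ : ℝ → ℝ) (hφ : ∀ t : ℝ, φ t = max (t ^ a) (t ^ b)) :
    ∀ s t : ℝ, 0 < s → 0 < t →
      (2 : ℝ) ^ (1 - b) ≤ (φ s + φ t) / φ (s + t) ∧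
      (φ s + φ t) / φ (s + t) ≤ (2 : ℝ) ^ (1 - a) := by
  intro s t hs ht
  have hab : a ≤ b := ha1.trans hb
  have hu : 0 < s + t := by linarith
  have hφpos : ∀ x : ℝ, 0 < x → 0 < φ x := fun x hx => by
    rw [hφ]; exact lt_max_of_lt_left (Real.rpow_pos_of_pos hx a)
  have hφu := hφpos _ hu
  -- lower bound
  have hlow : 2 ^ (1 - b) * φ (s + t) ≤ φ s + φ t := by
    rcases le_or_gt (s + t) 1 with h1 | h1
    · -- s + t ≤ 1 : φ (s+t) = (s+t)^a
      have hmax : φ (s + t) = (s + t) ^ a :=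
        (hφ _).trans (max_eq_left (Real.rpow_le_rpow_of_exponent_ge hu h1 hab))
      have hsub := helper_subadd s t a hs.le ht.le ha0.le ha1
      have h2b : (2 : ℝ) ^ (1 - b) ≤ 1 :=
        Real.rpow_le_one_of_one_le_of_nonpos (by norm_num) (by linarith)
      have hsa : s ^ a ≤ φ s := (hφ s) ▸ le_max_left _ _
      have hta : t ^ a ≤ φ t := (hφ t) ▸ le_max_left _ _
      have hpos : (0:ℝ) ≤ (s + t) ^ a := by positivity
      calc 2 ^ (1 - b) * φ (s + t) ≤ 1 * (s + t) ^ a := by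
            rw [hmax]; exact mul_le_mul_of_nonneg_right h2b hpos
        _ = (s + t) ^ a := one_mul _
        _ ≤ s ^ a + t ^ a := hsub
        _ ≤ φ s + φ t := add_le_add hsa hta
    · -- 1 < s + t : φ (s+t) = (s+t)^b
      have hmax : φ (s + t) = (s + t) ^ b :=
        (hφ _).trans (max_eq_right (Real.rpow_le_rpow_of_exponent_le h1.le hab))
      have hge := helper_ge s t b hs.le ht.le hb
      have hsb : s ^ b ≤ φ s := (hφ s) ▸ le_max_right _ _
      have htb : t ^ b ≤ φ t := (hφ t) ▸ le_max_right _ _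
      have h2 : (0:ℝ) < 2 ^ (1 - b) := by positivity
      calc 2 ^ (1 - b) * φ (s + t) ≤ 2 ^ (1 - b) * (2 ^ (b - 1) * (s ^ b + t ^ b)) := by
            rw [hmax]; exact mul_le_mul_of_nonneg_left hge h2.le
        _ = s ^ b + t ^ b := by
            rw [← mul_assoc, ← Real.rpow_add (by norm_num)]
            norm_num
        _ ≤ φ s + φ t := add_le_add hsb htb
  -- upper bound
  have hupp : φ s + φ t ≤ 2 ^ (1 - a) * φ (s + t) := by
    rcases le_or_gt (s + t) 1 with h1 | h1
    · -- φ x = x ^ a for all of s, t, s+t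
      have key : ∀ x : ℝ, 0 < x → x ≤ 1 → φ x = x ^ a := fun x hx hx1 =>
        (hφ x).trans (max_eq_left (Real.rpow_le_rpow_of_exponent_ge hx hx1 hab))
      rw [key s hs (by linarith), key t ht (by linarith), key _ hu h1]
      exact helper_le s t a hs.le ht.le ha0 ha1
    · have hmax : φ (s + t) = (s + t) ^ b :=
        (hφ _).trans (max_eq_right (Real.rpow_le_rpow_of_exponent_le h1.le hab))
      have hba : 0 ≤ b - a := by linarith
      have hub : (1:ℝ) ≤ (s + t) ^ (b - a) := Real.one_le_rpow h1.le hba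
      have key : ∀ x : ℝ, 0 < x → x ≤ s + t → φ x ≤ x ^ a * (s + t) ^ (b - a) := by
        intro x hx hxu
        rw [hφ]
        apply max_le
        · nth_rewrite 1 [← mul_one (x ^ a)]
          exact mul_le_mul_of_nonneg_left hub (by positivity)
        · have : x ^ b = x ^ a * x ^ (b - a) := by
            rw [← Real.rpow_add hx]; ring_nf
          rw [this]
          exact mul_le_mul_of_nonneg_left
            (Real.rpow_le_rpow hx.le hxu hba) (by positivity)
      have hle := helper_le s t a hs.le ht.le ha0 ha1
      calc φ s + φ t ≤ s ^ a * (s + t) ^ (b - a) + t ^ a * (s + t) ^ (b - a) :=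
            add_le_add (key s hs (by linarith)) (key t ht (by linarith))
        _ = (s ^ a + t ^ a) * (s + t) ^ (b - a) := by ring
        _ ≤ 2 ^ (1 - a) * (s + t) ^ a * (s + t) ^ (b - a) :=
            mul_le_mul_of_nonneg_right hle (by positivity)
        _ = 2 ^ (1 - a) * φ (s + t) := by
            rw [hmax, mul_assoc, ← Real.rpow_add hu]
            ring_nf
  constructor
  · rw [le_div_iff₀ hφu]; linarith
  · rw [div_le_iff₀ hφu]; linarith
end

section
/- For 0 < a < b < 1, the function f(t) = (b^t − a^t)/t is decreasing on (0, ∞). -/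
open intervalIntegral in
theorem stmt_15 (a b : ℝ) (ha : 0 < a) (hab : a < b) (hb : b < 1) :
    StrictAntiOn (fun t : ℝ => (b ^ t - a ^ t) / t) (Set.Ioi (0 : ℝ)) := by
  intro s hs t ht hst
  simp only [Set.mem_Ioi] at hs ht
  have key : ∀ u : ℝ, 0 < u → (b ^ u - a ^ u) / u = ∫ x in a..b, x ^ (u - 1) := by
    intro u hu
    rw [integral_rpow (Or.inl (by linarith))]
    rw [sub_add_cancel]
  have hc : ∀ u : ℝ, ContinuousOn (fun x : ℝ => x ^ (u - 1)) (Set.Icc a b) := by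
    intro u
    apply ContinuousOn.rpow_const continuousOn_id
    intro x hx
    left
    exact ne_of_gt (lt_of_lt_of_le ha hx.1)
  simp only
  rw [key s hs, key t ht]
  apply integral_lt_integral_of_continuousOn_of_le_of_exists_lt hab
    (hc t) (hc s)
  · intro x hx
    exact le_of_lt (Real.rpow_lt_rpow_of_exponent_gt (ha.trans hx.1)
      (lt_of_le_of_lt hx.2 hb) (by linarith))
  · exact ⟨b, ⟨hab.le, le_refl b⟩, Real.rpow_lt_rpow_of_exponent_gt (ha.trans hab) hb (by linarith)⟩
end

section
/- For a > 0, the function f(t) = t·log((1 + a/t)/(1 − a/t)) is decreasing on (a, ∞). -/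
theorem stmt_16 (a : ℝ) (ha : 0 < a) :
    StrictAntiOn (fun t : ℝ => t * Real.log ((1 + a / t) / (1 - a / t)))
      (Set.Ioi a) := by
  have hderiv : ∀ t ∈ Set.Ioi a,
      HasDerivAt (fun s : ℝ => s * (Real.log (s + a) - Real.log (s - a)))
        (1 * (Real.log (t + a) - Real.log (t - a)) + t * (1 / (t + a) - 1 / (t - a))) t := by
    intro t ht
    simp only [Set.mem_Ioi] at ht
    have hta : 0 < t + a := by linarith
    have hta' : 0 < t - a := by linarith
    have h1 : HasDerivAt (fun s : ℝ => Real.log (s + a)) (1 / (t + a)) t :=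
      ((hasDerivAt_id t).add_const a).log hta.ne'
    have h2 : HasDerivAt (fun s : ℝ => Real.log (s - a)) (1 / (t - a)) t :=
      ((hasDerivAt_id t).sub_const a).log hta'.ne'
    exact (hasDerivAt_id t).mul (h1.sub h2)
  have key : StrictAntiOn (fun t : ℝ => t * (Real.log (t + a) - Real.log (t - a)))
      (Set.Ioi a) := by
    apply strictAntiOn_of_deriv_neg (convex_Ioi a)
    · intro t ht
      exact ((hderiv t ht).continuousAt).continuousWithinAt
    · intro t ht
      rw [interior_Ioi] at ht
      have ht' := ht
      simp only [Set.mem_Ioi] at ht'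
      have hta : 0 < t + a := by linarith
      have hta' : 0 < t - a := by linarith
      rw [(hderiv t ht).deriv]
      have hx : 1 < (t + a) / (t - a) := (one_lt_div hta').mpr (by linarith)
      have hu : 0 < Real.log ((t + a) / (t - a)) := Real.log_pos hx
      have hs := Real.self_lt_sinh_iff.mpr hu
      rw [Real.sinh_log (by positivity)] at hs
      have hlog : Real.log (t + a) - Real.log (t - a) = Real.log ((t + a) / (t - a)) :=
        (Real.log_div hta.ne' hta'.ne').symm
      have heq : ((t + a) / (t - a) - ((t + a) / (t - a))⁻¹) / 2
          = -(t * (1 / (t + a) - 1 / (t - a))) := by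
        field_simp
        ring
      rw [heq] at hs
      rw [one_mul, hlog]
      linarith
  intro x hx y hy hxy
  have ex : ∀ t ∈ Set.Ioi a,
      t * Real.log ((1 + a / t) / (1 - a / t))
        = t * (Real.log (t + a) - Real.log (t - a)) := by
    intro t ht
    simp only [Set.mem_Ioi] at ht
    have htpos : 0 < t := lt_trans ha ht
    have hta : 0 < t + a := by linarith
    have hta' : 0 < t - a := by linarith
    have h1 : 1 + a / t = (t + a) / t := by field_simp
    have h2 : 1 - a / t = (t - a) / t := by field_simp
    have h3 : (t + a) / t / ((t - a) / t) = (t + a) / (t - a) := by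
      field_simp
    rw [h1, h2, h3, Real.log_div hta.ne' hta'.ne']
  simp only
  rw [ex x hx, ex y hy]
  exact key hx hy hxy
end
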